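/- For any graph G and vertices x, y of G, the number of independent sets of G is at most the number of independent sets of the compression G_{x→y}. -/

import Mathlib

open SimpleGraph Finset

/-- Number of cliques (complete vertex subsets, including the empty set) of `G`. -/
noncomputable def cliqueCount {V : Type*} (G : SimpleGraph V) : ℕ :=
  Nat.card {s : Finset V // G.IsClique (s : Set V)}

/-- Number of independent sets of `G` (cliques of the complement). -/
noncomputable def indepCount {V : Type*} (G : SimpleGraph V) : ℕ :=
  cliqueCount Gᶜ

/-- `v` is in `N_x`: adjacent to `x` but not to `y`, and outside `{x, y}`. -/
def NxSet {V : Type*} (G : SimpleGraph V) (x y v : V) : Prop :=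
  v ≠ x ∧ v ≠ y ∧ G.Adj v x ∧ ¬ G.Adj v y

/-- The compression `G_{x→y}`: edges from `x` to `N_x` are removed and replaced by
edges from `y` to `N_x`; all other adjacencies are unchanged. -/
def compress {V : Type*} (G : SimpleGraph V) (x y : V) : SimpleGraph V where
  Adj a b := a ≠ b ∧ ((G.Adj a b ∧ ¬ ((NxSet G x y a ∧ b = x) ∨ (NxSet G x y b ∧ a = x))) ∨
    (a = y ∧ NxSet G x y b) ∨ (b = y ∧ NxSet G x y a))
  symm := by
    constructor
    intro a b hab
    obtain ⟨hne, h⟩ := hab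
    refine ⟨hne.symm, ?_⟩
    rw [G.adj_comm b a]
    tauto
  loopless := by constructor; intro a h; exact h.1 rfl

/-- `s` is an independent set of `G`. -/
def Indep {V : Type*} (G : SimpleGraph V) (s : Finset V) : Prop :=
  ∀ ⦃a⦄, a ∈ s → ∀ ⦃b⦄, b ∈ s → ¬ G.Adj a b

lemma indep_iff {V : Type*} (G : SimpleGraph V) (s : Finset V) :
    Gᶜ.IsClique (s : Set V) ↔ Indep G s := by
  constructor
  · intro h a ha b hb hab
    by_cases hne : a = b
    · exact G.loopless.irrefl b (hne ▸ hab)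
    · exact (h ha hb hne).2 hab
  · intro h a ha b hb hne
    exact ⟨hne, h ha hb⟩

lemma swap_indep {V : Type*} [DecidableEq V] {G : SimpleGraph V} {x y : V} (hxy : x ≠ y) {s : Finset V}
    (hs : Indep G s) (hy : y ∈ s) {v : V} (hv : v ∈ s) (hvN : NxSet G x y v) :
    Indep (compress G x y) (insert x (s.erase y)) := by
  have hxs : x ∉ s := fun hxs => hs hv hxs hvN.2.2.1
  intro a ha b hb hab
  obtain ⟨hne, hcase⟩ := hab
  rcases hcase with ⟨hGab, hrem⟩ | ⟨hay, hNb⟩ | ⟨hby, hNa⟩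
  · -- an edge of G that was not removed
    rcases Finset.mem_insert.1 ha with rfl | ha'
    · rcases Finset.mem_insert.1 hb with rfl | hb'
      · exact hne rfl
      · have hbs : b ∈ s := Finset.mem_of_mem_erase hb'
        have hbny : b ≠ y := Finset.ne_of_mem_erase hb'
        have hbnx : b ≠ a := fun h => hne h.symm
        by_cases hby : G.Adj b y
        · exact hs hbs hy hby
        · exact hrem (Or.inr ⟨⟨hbnx, hbny, hGab.symm, hby⟩, rfl⟩)
    · rcases Finset.mem_insert.1 hb with rfl | hb'
      · have has : a ∈ s := Finset.mem_of_mem_erase ha'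
        have hany : a ≠ y := Finset.ne_of_mem_erase ha'
        by_cases hay : G.Adj a y
        · exact hs has hy hay
        · exact hrem (Or.inl ⟨⟨hne, hany, hGab, hay⟩, rfl⟩)
      · exact hs (Finset.mem_of_mem_erase ha') (Finset.mem_of_mem_erase hb') hGab
  · -- a = y : impossible, y ∉ insert x (s.erase y)
    subst hay
    rcases Finset.mem_insert.1 ha with h | h
    · exact hxy h.symm
    · exact (Finset.ne_of_mem_erase h) rfl
  · subst hby
    rcases Finset.mem_insert.1 hb with h | h
    · exact hxy h.symm
    · exact (Finset.ne_of_mem_erase h) rfl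

lemma not_indep_struct {V : Type*} {G : SimpleGraph V} {x y : V} {s : Finset V}
    (hs : Indep G s) (h : ¬ Indep (compress G x y) s) :
    y ∈ s ∧ ∃ v ∈ s, NxSet G x y v := by
  rw [Indep] at h
  push_neg at h
  obtain ⟨a, ha, b, hb, hab⟩ := h
  obtain ⟨hne, hcase⟩ := hab
  rcases hcase with ⟨hGab, _⟩ | ⟨hay, hNb⟩ | ⟨hby, hNa⟩
  · exact absurd hGab (hs ha hb)
  · exact ⟨hay ▸ ha, b, hb, hNb⟩
  · exact ⟨hby ▸ hb, a, ha, hNa⟩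

theorem indepCount_le_indepCount_compress {V : Type*} [Fintype V] (G : SimpleGraph V)
    (x y : V) (hxy : x ≠ y) :
    indepCount G ≤ indepCount (compress G x y) := by
  classical
  set H := compress G x y with hH
  unfold indepCount cliqueCount
  have key : ∀ s : Finset V, Indep G s → ¬ Indep H s →
      y ∈ s ∧ x ∉ s ∧ Indep H (insert x (s.erase y)) ∧ ¬ Indep G (insert x (s.erase y)) := by
    intro s hs hns
    obtain ⟨hy, v, hv, hvN⟩ := not_indep_struct hs hns
    have hxs : x ∉ s := fun hxs => hs hv hxs hvN.2.2.1
    refine ⟨hy, hxs, swap_indep hxy hs hy hv hvN, ?_⟩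
    intro hind
    have hvx : v ≠ x := hvN.1
    have hv' : v ∈ insert x (s.erase y) :=
      Finset.mem_insert_of_mem (Finset.mem_erase.2 ⟨hvN.2.1, hv⟩)
    exact hind (Finset.mem_insert_self x _) hv' hvN.2.2.1.symm
  let f : {s : Finset V // Gᶜ.IsClique (s : Set V)} →
      {s : Finset V // Hᶜ.IsClique (s : Set V)} := fun ⟨s, hs⟩ =>
    if h : Indep H s then ⟨s, (indep_iff H s).2 h⟩
    else ⟨insert x (s.erase y),
      (indep_iff H _).2 (key s ((indep_iff G s).1 hs) h).2.2.1⟩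
  have hf : Function.Injective f := by
    rintro ⟨s₁, hs₁⟩ ⟨s₂, hs₂⟩ heq
    have hs₁' := (indep_iff G s₁).1 hs₁
    have hs₂' := (indep_iff G s₂).1 hs₂
    simp only [f] at heq
    split_ifs at heq with h1 h2 h2 <;>
      simp only [Subtype.mk.injEq] at heq ⊢
    · exact heq
    · -- s₁ H-indep, s₂ not : s₁ = insert x (s₂.erase y), not G-indep, contradiction
      exact absurd (heq ▸ hs₁') (key s₂ hs₂' h2).2.2.2
    · exact absurd (heq ▸ hs₂') (key s₁ hs₁' h1).2.2.2
    · obtain ⟨hy1, hx1, _, _⟩ := key s₁ hs₁' h1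
      obtain ⟨hy2, hx2, _, _⟩ := key s₂ hs₂' h2
      have h1e : (insert x (s₁.erase y)).erase x = s₁.erase y :=
        Finset.erase_insert (fun h => hx1 (Finset.mem_of_mem_erase h))
      have h2e : (insert x (s₂.erase y)).erase x = s₂.erase y :=
        Finset.erase_insert (fun h => hx2 (Finset.mem_of_mem_erase h))
      have : s₁.erase y = s₂.erase y := by rw [← h1e, ← h2e, heq]
      calc s₁ = insert y (s₁.erase y) := (Finset.insert_erase hy1).symm
        _ = insert y (s₂.erase y) := by rw [this]
        _ = s₂ := Finset.insert_erase hy2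
  exact Nat.card_le_card_of_injective f hf
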